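/- Let T be an undirected tree and let G be the graph whose vertices are the directed edges of the double direction D of T, with two directed edges adjacent in G iff they have the same sink, or they are the two opposite orientations of the same edge of T. Then a set A of directed edges is independent in G if and only if A is the edge set of a directed forest in D; that is, Δ(D) equals the independence complex I(G). -/

import Mathlib

/-- `IsDipath T a b p` : `p` is the list of successive vertices (after `a`) of a
directed path from `a` to `b` using edges of the relation `T`. -/
def IsDipath {V : Type} (T : V → V → Prop) : V → V → List V → Prop
  | a, b, [] => a = b
  | a, b, c :: p => T a c ∧ IsDipath T c b p

/-- `T` is a spanning directed rooted tree of the digraph `E` with root `r`: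
its edges are edges of `E` and every vertex is reached by a unique directed path from `r`. -/
def IsSpanningDitree {V : Type} (E T : V → V → Prop) (r : V) : Prop :=
  (∀ x y, T x y → E x y) ∧ ∀ x : V, ∃! p : List V, IsDipath T r x p

/-- The edge relation associated to a finite set of directed edges. -/
def edgeRel {V : Type} [DecidableEq V] (F : Finset (V × V)) : V → V → Prop :=
  fun x y => (x, y) ∈ F

/-- A finite set of directed edges is a directed forest in the digraph `E`:
all edges belong to `E`, every vertex has in-degree at most one, and there are
no directed cycles.  (Equivalently, it is a disjoint union of directed rooted trees.) -/
def IsDirectedForest {V : Type} [DecidableEq V] (E : V → V → Prop) (F : Finset (V × V)) : Prop :=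
  (∀ e ∈ F, E e.1 e.2) ∧
  (∀ x y y' : V, (y, x) ∈ F → (y', x) ∈ F → y = y') ∧
  ∀ (x : V) (p : List V), p ≠ [] → ¬ IsDipath (edgeRel F) x x p

/-- A facet of the complex of directed trees `Δ(E)`: a maximal directed forest. -/
def IsFacet {V : Type} [DecidableEq V] (E : V → V → Prop) (F : Finset (V × V)) : Prop :=
  IsDirectedForest E F ∧ ∀ F', IsDirectedForest E F' → F ⊆ F' → F' = F

/-- The graph on the arcs of the double direction of `G`: two arcs are adjacent iff they
are distinct and either have the same sink or are the two opposite orientations of the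
same edge of `G`.  (Only pairs that are genuine arcs of `G` are ever adjacent.) -/
def arcGraph {V : Type} (G : SimpleGraph V) : SimpleGraph (V × V) where
  Adj e f := G.Adj e.1 e.2 ∧ G.Adj f.1 f.2 ∧ e ≠ f ∧
    (e.2 = f.2 ∨ (e.1 = f.2 ∧ e.2 = f.1))
  symm := by
    constructor
    rintro ⟨a, b⟩ ⟨c, d⟩ ⟨h1, h2, h3, h4⟩
    refine ⟨h2, h1, fun h => h3 h.symm, ?_⟩
    rcases h4 with h | ⟨h, h'⟩
    · exact Or.inl h.symm
    · exact Or.inr ⟨h'.symm, h.symm⟩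
  loopless := by constructor; rintro ⟨a, b⟩ ⟨-, -, h, -⟩; exact h rfl

section Aux
variable {V : Type} {T : V → V → Prop}

@[simp] lemma isDipath_nil {a b : V} : IsDipath T a b [] ↔ a = b := Iff.rfl
@[simp] lemma isDipath_cons {a b c : V} {p : List V} :
    IsDipath T a b (c :: p) ↔ T a c ∧ IsDipath T c b p := Iff.rfl

lemma dipath_append : ∀ (p q : List V) (a b : V),
    IsDipath T a b (p ++ q) ↔ ∃ c, IsDipath T a c p ∧ IsDipath T c b q
  | [], q, a, b => by simp
  | c :: p, q, a, b => by
    simp [dipath_append p q c b, and_assoc]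

lemma dipath_getLast? : ∀ (p : List V) (a b : V), IsDipath T a b p → p ≠ [] →
    p.getLast? = some b
  | [c], a, b, h, _ => by
    obtain ⟨-, h2⟩ := h; simp_all
  | c :: d :: p, a, b, h, _ => by
    rw [List.getLast?_cons_cons]
    exact dipath_getLast? (d :: p) c b h.2 (by simp)

lemma not_nodup_split : ∀ {l : List V}, ¬ l.Nodup →
    ∃ (c : V) (l1 l2 l3 : List V), l = l1 ++ c :: l2 ++ c :: l3
  | [], h => absurd List.nodup_nil h
  | a :: l, h => by
    by_cases ha : a ∈ l
    · obtain ⟨s, t, rfl⟩ := List.append_of_mem ha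
      exact ⟨a, [], s, t, by simp⟩
    · have hl : ¬ l.Nodup := fun hn => h (List.nodup_cons.2 ⟨ha, hn⟩)
      obtain ⟨c, l1, l2, l3, rfl⟩ := not_nodup_split hl
      exact ⟨c, a :: l1, l2, l3, by simp⟩

lemma exists_walk {G : SimpleGraph V} (hT : ∀ u v, T u v → G.Adj u v) :
    ∀ (p : List V) (a b : V), IsDipath T a b p →
      ∃ w : G.Walk a b, w.support = a :: p
  | [], a, b, h => by cases h; exact ⟨SimpleGraph.Walk.nil, rfl⟩
  | c :: p, a, b, h => by
    obtain ⟨w, hw⟩ := exists_walk hT p c b h.2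
    exact ⟨SimpleGraph.Walk.cons (hT _ _ h.1) w, by simp [hw]⟩

end Aux

lemma no_closed_dipath {V : Type} [DecidableEq V] (G : SimpleGraph V)
    (hG : G.IsTree) (A : Finset (V × V)) (hA : ∀ e ∈ A, G.Adj e.1 e.2)
    (hopp : ∀ a b : V, (a, b) ∈ A → (b, a) ∈ A → False) :
    ∀ (n : ℕ) (x : V) (p : List V), p.length ≤ n → p ≠ [] →
      ¬ IsDipath (edgeRel A) x x p := by
  intro n
  induction n with
  | zero =>
    intro x p hl hne _
    exact hne (List.length_eq_zero_iff.1 (Nat.le_zero.1 hl))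
  | succ n IH =>
    intro x p hlen hne hdip
    have hT : ∀ u v, edgeRel A u v → G.Adj u v := fun u v h => hA (u, v) h
    have hlast : p.getLast? = some x := dipath_getLast? p x x hdip hne
    have hp : p.dropLast ++ [x] = p := List.dropLast_append_getLast? x hlast
    by_cases hnd : (x :: p.dropLast).Nodup
    · -- vertices distinct: build two distinct paths in the tree
      match p, hdip with
      | [c], hdip =>
        obtain ⟨h1, h2⟩ := hdip
        rw [show c = x from h2] at h1
        exact G.loopless.irrefl x (hA _ h1)
      | [c, d], hdip =>
        obtain ⟨h1, h2, h3⟩ := hdip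
        rw [show d = x from h3] at h2
        exact hopp x c h1 h2
      | c :: d :: e :: q, hdip =>
        set p : List V := c :: d :: e :: q with hpdef
        have hne' : p ≠ [] := by simp [hpdef]
        have hdl : p.dropLast ≠ [] := by simp [hpdef]
        rw [← hp] at hdip
        obtain ⟨m, hm1, hm2⟩ := (dipath_append _ _ _ _).1 hdip
        -- hm2 : IsDipath (edgeRel A) m x [x], so (m, x) ∈ A
        obtain ⟨hmx, -⟩ := hm2
        have hmlast : p.dropLast.getLast? = some m := dipath_getLast? _ _ _ hm1 hdl
        have hmem : m ∈ p.dropLast := List.mem_of_mem_getLast? hmlast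
        obtain ⟨w1, hw1⟩ := exists_walk hT p.dropLast x m hm1
        have hxm : G.Adj x m := (hA _ hmx).symm
        have hp1 : w1.IsPath := by
          rw [SimpleGraph.Walk.isPath_def, hw1]; exact hnd
        have hxne : x ≠ m := by
          intro h; rw [List.nodup_cons] at hnd; exact hnd.1 (h ▸ hmem)
        have hp2 : (SimpleGraph.Walk.cons hxm SimpleGraph.Walk.nil).IsPath := by
          rw [SimpleGraph.Walk.isPath_def]; simp [hxne]
        have := SimpleGraph.isAcyclic_iff_path_unique.1 hG.IsAcyclic ⟨w1, hp1⟩ ⟨_, hp2⟩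
        have hw1len : w1.length = p.dropLast.length := by
          have := w1.length_support
          rw [hw1] at this
          simpa using this.symm
        have : w1.length = 1 := by
          have := congrArg (fun q : G.Path x m => q.1.length) this
          simpa using this
        rw [hw1len] at this
        simp [hpdef] at this
    · -- repeated vertex: extract a shorter closed dipath
      obtain ⟨c, l1, l2, l3, hsplit⟩ := not_nodup_split hnd
      match l1, hsplit with
      | [], hsplit =>
        rw [List.nil_append] at hsplit
        obtain ⟨hxc, hdl⟩ : x = c ∧ p.dropLast = l2 ++ c :: l3 := by simpa using hsplit
        rw [← hp, hdl, ← hxc] at hdip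
        rw [show (l2 ++ x :: l3) ++ [x] = (l2 ++ [x]) ++ (l3 ++ [x]) by simp] at hdip
        obtain ⟨m, hm1, -⟩ := (dipath_append _ _ _ _).1 hdip
        have : (l2 ++ [x]).getLast? = some m := dipath_getLast? _ _ _ hm1 (by simp)
        have hmx : m = x := by simpa using this.symm
        rw [hmx] at hm1
        refine IH x (l2 ++ [x]) ?_ (by simp) hm1
        have : p.length = l2.length + l3.length + 2 := by
          rw [← hp, hdl]; simp; omega
        simp only [List.length_append, List.length_cons, List.length_nil]; omega
      | a :: l1', hsplit =>
        obtain ⟨hxa, hdl⟩ : x = a ∧ p.dropLast = l1' ++ c :: l2 ++ c :: l3 := by simpa using hsplit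
        rw [← hp, hdl] at hdip
        rw [show (l1' ++ c :: l2 ++ c :: l3) ++ [x]
            = (l1' ++ [c]) ++ ((l2 ++ [c]) ++ (l3 ++ [x])) by simp] at hdip
        obtain ⟨m, hm1, hm2⟩ := (dipath_append _ _ _ _).1 hdip
        obtain ⟨m', hm'1, -⟩ := (dipath_append _ _ _ _).1 hm2
        have hmc : m = c := by
          have := dipath_getLast? _ _ _ hm1 (by simp)
          simpa using this.symm
        have hm'c : m' = c := by
          have := dipath_getLast? _ _ _ hm'1 (by simp)
          simpa using this.symm
        rw [hmc, hm'c] at hm'1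
        refine IH c (l2 ++ [c]) ?_ (by simp) hm'1
        have : p.length = l1'.length + l2.length + l3.length + 3 := by
          rw [← hp, hdl]; simp; omega
        simp only [List.length_append, List.length_cons, List.length_nil]; omega

/-- For a tree `G` with double direction `D`, a set `A` of arcs of `D` is independent in
the arc graph (same sink, or opposite orientations, gives adjacency) if and only if `A`
is the edge set of a directed forest in `D`; that is, `Δ(D)` equals the independence
complex of the arc graph. -/
theorem forest_iff_indep_arcGraph {V : Type} [DecidableEq V] (G : SimpleGraph V)
    (hG : G.IsTree) (A : Finset (V × V)) (hA : ∀ e ∈ A, G.Adj e.1 e.2) :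
    (∀ e ∈ A, ∀ f ∈ A, ¬ (arcGraph G).Adj e f) ↔ IsDirectedForest G.Adj A := by
  constructor
  · intro hind
    have hopp : ∀ a b : V, (a, b) ∈ A → (b, a) ∈ A → False := by
      intro a b ha hb
      refine hind _ ha _ hb ⟨hA _ ha, hA _ hb, ?_, Or.inr ⟨rfl, rfl⟩⟩
      intro h
      exact (hA _ ha).ne (congrArg Prod.fst h)
    refine ⟨hA, ?_, ?_⟩
    · intro x y y' hy hy'
      by_contra hne
      exact hind _ hy _ hy' ⟨hA _ hy, hA _ hy',
        fun h => hne (congrArg Prod.fst h), Or.inl rfl⟩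
    · intro x p hp hdip
      exact no_closed_dipath G hG A hA hopp p.length x p le_rfl hp hdip
  · rintro ⟨h1, h2, h3⟩ e he f hf ⟨hge, hgf, hne, hor⟩
    rcases hor with h | ⟨ha, hb⟩
    · have he' : (e.1, e.2) ∈ A := by simpa using he
      have hf' : (f.1, e.2) ∈ A := by rw [h]; simpa using hf
      have : e.1 = f.1 := h2 e.2 e.1 f.1 he' hf'
      exact hne (Prod.ext this h)
    · have he' : (e.1, e.2) ∈ A := by simpa using he
      have hf' : (e.2, e.1) ∈ A := by rw [ha, hb]; simpa using hf
      exact h3 e.1 [e.2, e.1] (by simp) ⟨he', hf', rfl⟩
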